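/- Let P be a v×v real orthogonal projection matrix (symmetric and idempotent), and let Q be a v×s real matrix whose column space equals the range of P. Then the matrix I_v − P + Q Qᵀ is symmetric positive definite, and its inverse is given by (I_v − P + Q Qᵀ)^{−1} = I_v − P + (Q Qᵀ)⁺. -/

import Mathlib

open Matrix

/-- The column space of a real matrix. -/
def colSpace {m n : ℕ} (A : Matrix (Fin m) (Fin n) ℝ) : Submodule ℝ (Fin m → ℝ) :=
  LinearMap.range A.mulVecLin

/-- `B` is the Moore–Penrose pseudoinverse of `A`. -/
def IsMPInv {m n : ℕ} (A : Matrix (Fin m) (Fin n) ℝ) (B : Matrix (Fin n) (Fin m) ℝ) : Prop :=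
  A * B * A = A ∧ B * A * B = B ∧ (A * B)ᵀ = A * B ∧ (B * A)ᵀ = B * A

lemma matExt {m n : ℕ} {A B : Matrix (Fin m) (Fin n) ℝ} (h : ∀ x, A *ᵥ x = B *ᵥ x) :
    A = B := by
  ext i j
  have := congrFun (h (Pi.single j 1)) i
  simpa [Matrix.mulVec_single_one] using this

lemma mem_colSpace {m n : ℕ} {A : Matrix (Fin m) (Fin n) ℝ} {y : Fin m → ℝ} :
    y ∈ colSpace A ↔ ∃ x, A *ᵥ x = y := by
  simp [colSpace, LinearMap.mem_range, Matrix.mulVecLin_apply]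

/-- Cancellation trick over ℝ: `M * Mᵀ = 0 → M = 0`. -/
lemma mul_transpose_eq_zero {m n : ℕ} {M : Matrix (Fin m) (Fin n) ℝ}
    (h : M * Mᵀ = 0) : M = 0 := by
  have : M * Mᴴ = 0 := by
    rwa [Matrix.conjTranspose_eq_transpose_of_trivial]
  exact Matrix.self_mul_conjTranspose_eq_zero.mp this

theorem stmt15 (v s : ℕ) (P : Matrix (Fin v) (Fin v) ℝ)
    (hPsymm : Pᵀ = P) (hPidem : P * P = P)
    (Q : Matrix (Fin v) (Fin s) ℝ) (hQrange : colSpace Q = colSpace P)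
    (Wp : Matrix (Fin v) (Fin v) ℝ) (hWp : IsMPInv (Q * Qᵀ) Wp) :
    (1 - P + Q * Qᵀ).PosDef ∧ (1 - P + Q * Qᵀ)⁻¹ = 1 - P + Wp := by
  obtain ⟨h1, h2, h3, h4⟩ := hWp
  set G : Matrix (Fin v) (Fin v) ℝ := Q * Qᵀ with hGdef
  have hGsymm : Gᵀ = G := by
    rw [hGdef, Matrix.transpose_mul, Matrix.transpose_transpose]
  -- P acts as identity on the column space of Q
  have hPQ : P * Q = Q := by
    apply matExt; intro x
    have hmem : Q *ᵥ x ∈ colSpace P := by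
      rw [← hQrange]; exact mem_colSpace.mpr ⟨x, rfl⟩
    obtain ⟨y, hy⟩ := mem_colSpace.mp hmem
    calc (P * Q) *ᵥ x = P *ᵥ (Q *ᵥ x) := by rw [Matrix.mulVec_mulVec]
      _ = P *ᵥ (P *ᵥ y) := by rw [hy]
      _ = (P * P) *ᵥ y := by rw [Matrix.mulVec_mulVec]
      _ = P *ᵥ y := by rw [hPidem]
      _ = Q *ᵥ x := hy
  have hPG : P * G = G := by rw [hGdef, ← Matrix.mul_assoc, hPQ]
  have hGP : G * P = G := by
    have := congrArg Matrix.transpose hPG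
    rwa [Matrix.transpose_mul, hPsymm, hGsymm] at this
  -- generic step : if E * G = G, G * Eᵀ = G, E * Qᵀᵀ... prove E * Q = Q
  have keyEQ : ∀ E : Matrix (Fin v) (Fin v) ℝ, E * G = G → G * Eᵀ = G → E * Q = Q := by
    intro E hEG hGEt
    have hz : (Q - E * Q) * (Q - E * Q)ᵀ = 0 := by
      have expand : (Q - E * Q) * (Q - E * Q)ᵀ
          = G - G * Eᵀ - (E * G - E * (G * Eᵀ)) := by
        rw [Matrix.transpose_sub, Matrix.transpose_mul, Matrix.sub_mul,
          Matrix.mul_sub, Matrix.mul_sub, hGdef]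
        simp only [Matrix.mul_assoc]
      rw [expand, hGEt, hEG]
      simp
    have := mul_transpose_eq_zero hz
    have := sub_eq_zero.mp this
    exact this.symm
  have hEQ : (G * Wp) * Q = Q := by
    apply keyEQ
    · exact h1
    · have hEG2 := congrArg Matrix.transpose h1
      rw [Matrix.transpose_mul, hGsymm] at hEG2
      exact hEG2
  have hFG : (Wp * G) * G = G := by
    have hGF : G * (Wp * G) = G := by rw [← Matrix.mul_assoc]; exact h1
    have := congrArg Matrix.transpose hGF
    rwa [Matrix.transpose_mul, hGsymm, h4] at this
  have hFQ : (Wp * G) * Q = Q := by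
    apply keyEQ
    · exact hFG
    · rw [h4, ← Matrix.mul_assoc]; exact h1
  -- any E with E*Q = Q satisfies E*P = P
  have keyEP : ∀ E : Matrix (Fin v) (Fin v) ℝ, E * Q = Q → E * P = P := by
    intro E hEQ'
    apply matExt; intro y
    have hmem : P *ᵥ y ∈ colSpace Q := by
      rw [hQrange]; exact mem_colSpace.mpr ⟨y, rfl⟩
    obtain ⟨x, hx⟩ := mem_colSpace.mp hmem
    calc (E * P) *ᵥ y = E *ᵥ (P *ᵥ y) := by rw [Matrix.mulVec_mulVec]
      _ = E *ᵥ (Q *ᵥ x) := by rw [hx]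
      _ = (E * Q) *ᵥ x := by rw [Matrix.mulVec_mulVec]
      _ = Q *ᵥ x := by rw [hEQ']
      _ = P *ᵥ y := hx
  -- Wp * G = P
  have hWpG : Wp * G = P := by
    have h5 : (Wp * G) * P = P := keyEP _ hFQ
    have h6 : (Wp * G) * P = Wp * G := by rw [Matrix.mul_assoc, hGP]
    rw [h6] at h5; exact h5
  -- G * Wp = P
  have hGWp : G * Wp = P := by
    have h5 : (G * Wp) * P = P := keyEP _ hEQ
    have h6 : P * (G * Wp) = G * Wp := by rw [← Matrix.mul_assoc, hPG]
    have := congrArg Matrix.transpose h5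
    rw [Matrix.transpose_mul, hPsymm, h3] at this
    -- this : P * (G * Wp) = Pᵀ = P
    rw [h6] at this
    exact this
  have hPWp : P * Wp = Wp := by
    rw [← hWpG]; exact h2
  -- right inverse
  have e1 : (1 - P + G) * P = G := by
    rw [Matrix.add_mul, Matrix.sub_mul, Matrix.one_mul, hPidem, hGP]
    simp
  have e2 : (1 - P + G) * Wp = P := by
    rw [Matrix.add_mul, Matrix.sub_mul, Matrix.one_mul, hPWp, hGWp]
    simp
  have hright : (1 - P + G) * (1 - P + Wp) = 1 := by
    rw [Matrix.mul_add, Matrix.mul_sub, Matrix.mul_one, e1, e2]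
    abel
  -- symmetry of W
  have hWsymm : (1 - P + G)ᵀ = 1 - P + G := by
    rw [Matrix.transpose_add, Matrix.transpose_sub, Matrix.transpose_one, hPsymm, hGsymm]
  constructor
  · refine Matrix.PosDef.of_dotProduct_mulVec_pos ?_ ?_
    · show (1 - P + G)ᴴ = 1 - P + G
      rwa [Matrix.conjTranspose_eq_transpose_of_trivial]
    · intro x hx
      have hstar : star x = x := by
        funext i; simp
      rw [hstar]
      have hR : (1 - P) *ᵥ x = x - P *ᵥ x := by
        rw [Matrix.sub_mulVec, Matrix.one_mulVec]
      have hsplit : (1 - P + G) *ᵥ x = (1 - P) *ᵥ x + G *ᵥ x := by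
        rw [Matrix.add_mulVec]
      rw [hsplit, dotProduct_add]
      set a := x ⬝ᵥ ((1 - P) *ᵥ x) with ha
      set b := x ⬝ᵥ (G *ᵥ x) with hb
      have hRsymm : (1 - P)ᵀ = 1 - P := by
        rw [Matrix.transpose_sub, Matrix.transpose_one, hPsymm]
      have hRidem : (1 - P) * (1 - P) = 1 - P := by
        have h' : (1 - P) * (1 - P) = 1 - P - P + P * P := by noncomm_ring
        rw [h', hPidem]; abel
      have haeq : a = ((1 - P) *ᵥ x) ⬝ᵥ ((1 - P) *ᵥ x) := by
        rw [ha]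
        conv_lhs => rw [← hRidem, ← Matrix.mulVec_mulVec, Matrix.dotProduct_mulVec,
          ← Matrix.mulVec_transpose, hRsymm]
      have hbeq : b = (Qᵀ *ᵥ x) ⬝ᵥ (Qᵀ *ᵥ x) := by
        rw [hb, hGdef, ← Matrix.mulVec_mulVec, Matrix.dotProduct_mulVec,
          ← Matrix.mulVec_transpose]
      have hanonneg : 0 ≤ a := by
        rw [haeq]
        exact Finset.sum_nonneg fun i _ => mul_self_nonneg _
      have hbnonneg : 0 ≤ b := by
        rw [hbeq]
        exact Finset.sum_nonneg fun i _ => mul_self_nonneg _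
      rcases eq_or_lt_of_le (add_nonneg hanonneg hbnonneg) with heq | hlt
      · exfalso
        have hazero : a = 0 := le_antisymm (by linarith) hanonneg
        have hbzero : b = 0 := le_antisymm (by linarith) hbnonneg
        have hRx : (1 - P) *ᵥ x = 0 := by
          have hz : ((1 - P) *ᵥ x) ⬝ᵥ ((1 - P) *ᵥ x) = 0 := by rw [← haeq]; exact hazero
          exact dotProduct_self_eq_zero.mp hz
        have hQx : Qᵀ *ᵥ x = 0 := by
          have hz : (Qᵀ *ᵥ x) ⬝ᵥ (Qᵀ *ᵥ x) = 0 := by rw [← hbeq]; exact hbzero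
          exact dotProduct_self_eq_zero.mp hz
        have hPx : P *ᵥ x = x := by
          have := hR ▸ hRx
          have := sub_eq_zero.mp this
          exact this.symm
        have hmem : x ∈ colSpace Q := by
          rw [hQrange]; exact mem_colSpace.mpr ⟨x, hPx⟩
        obtain ⟨y, hy⟩ := mem_colSpace.mp hmem
        have hxx : x ⬝ᵥ x = 0 := by
          calc x ⬝ᵥ x = x ⬝ᵥ (Q *ᵥ y) := by rw [hy]
            _ = (x ᵥ* Q) ⬝ᵥ y := Matrix.dotProduct_mulVec x Q y
            _ = (Qᵀ *ᵥ x) ⬝ᵥ y := by rw [Matrix.mulVec_transpose]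
            _ = 0 := by rw [hQx]; simp
        exact hx (dotProduct_self_eq_zero.mp hxx)
      · exact hlt
  · exact Matrix.inv_eq_right_inv hright
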